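/- arXiv:2410.10718 — 3 statements merged into one kernel-verified Lean document; each statement's English description precedes it below -/
import Mathlib

section
/- Let G_2 be the resolvent of a Hermitian N×N matrix at spectral parameter z_2, and let S, T be positive semidefinite Hermitian N×N matrices. Then |⟨G_2 S G_2* T⟩| ≲ N ⟨|G_2| S⟩ ⟨|G_2| T⟩, where ⟨·⟩ denotes the normalized trace and |G_2| = (G_2 G_2*)^{1/2}. -/
open Matrix
open scoped ComplexOrder

open scoped MatrixOrder in
lemma aux_diag_re_nonneg {n : Type*} [Fintype n] [DecidableEq n] {M : Matrix n n ℂ}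
    (hM : M.PosSemidef) (i : n) : 0 ≤ (M i i).re := by
  obtain ⟨B, hB⟩ := CStarAlgebra.nonneg_iff_eq_star_mul_self.mp hM.nonneg
  rw [Matrix.star_eq_conjTranspose] at hB; subst hB
  rw [Matrix.mul_apply, Complex.re_sum]
  refine Finset.sum_nonneg fun k _ => ?_
  rw [Matrix.conjTranspose_apply]
  have : star (B k i) * B k i = ((Complex.normSq (B k i) : ℝ) : ℂ) := by
    rw [mul_comm]; exact Complex.mul_conj _
  rw [this]; simpa using Complex.normSq_nonneg _

open scoped MatrixOrder in
lemma aux_entry_abs_sq_le {n : Type*} [Fintype n] [DecidableEq n] {M : Matrix n n ℂ}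
    (hM : M.PosSemidef) (i j : n) :
    ‖M i j‖ ^ 2 ≤ (M i i).re * (M j j).re := by
  obtain ⟨B, hB⟩ := CStarAlgebra.nonneg_iff_eq_star_mul_self.mp hM.nonneg
  rw [Matrix.star_eq_conjTranspose] at hB; subst hB
  have hij : ‖(Bᴴ * B) i j‖ ≤ ∑ k, ‖B k i‖ * ‖B k j‖ := by
    rw [Matrix.mul_apply]
    refine (norm_sum_le _ _).trans_eq (Finset.sum_congr rfl fun k _ => ?_)
    simp [Matrix.conjTranspose_apply, norm_mul]
  have hii : ∀ l, ((Bᴴ * B) l l).re = ∑ k, ‖B k l‖ ^ 2 := by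
    intro l
    rw [Matrix.mul_apply, Complex.re_sum]
    refine Finset.sum_congr rfl fun k _ => ?_
    rw [Matrix.conjTranspose_apply]
    have : star (B k l) * B k l = ((Complex.normSq (B k l) : ℝ) : ℂ) := by
      rw [mul_comm]; exact Complex.mul_conj _
    rw [this, ← Complex.sq_norm]; norm_cast
  calc ‖(Bᴴ * B) i j‖ ^ 2
      ≤ (∑ k, ‖B k i‖ * ‖B k j‖) ^ 2 := by
        apply pow_le_pow_left₀ (norm_nonneg _) hij
    _ ≤ (∑ k, ‖B k i‖ ^ 2) * ∑ k, ‖B k j‖ ^ 2 :=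
        Finset.sum_mul_sq_le_sq_mul_sq _ _ _
    _ = ((Bᴴ * B) i i).re * ((Bᴴ * B) j j).re := by rw [hii, hii]

lemma aux_core {N : ℕ} {S T : Matrix (Fin N) (Fin N) ℂ} (hS : S.PosSemidef) (hT : T.PosSemidef)
    (a b : Fin N → ℂ) (g : Fin N → ℝ)
    (ha : ∀ i, ‖a i‖ = g i) (hb : ∀ i, ‖b i‖ = g i) :
    ‖∑ i, ∑ j, a i * (S i j * (b j * T j i))‖ ≤
      (∑ i, g i * (S i i).re) * (∑ i, g i * (T i i).re) := by
  have hg : ∀ i, 0 ≤ g i := fun i => (ha i) ▸ norm_nonneg _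
  set s : Fin N → ℝ := fun i => (S i i).re with hs_def
  set t : Fin N → ℝ := fun i => (T i i).re with ht_def
  have hs : ∀ i, 0 ≤ s i := fun i => aux_diag_re_nonneg hS i
  have ht : ∀ i, 0 ≤ t i := fun i => aux_diag_re_nonneg hT i
  set r : Fin N → ℝ := fun i => g i * Real.sqrt (s i * t i) with hr_def
  have step1 : ‖∑ i, ∑ j, a i * (S i j * (b j * T j i))‖ ≤
      ∑ i, ∑ j, r i * r j := by
    refine (norm_sum_le _ _).trans ?_
    refine Finset.sum_le_sum fun i _ => (norm_sum_le _ _).trans ?_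
    refine Finset.sum_le_sum fun j _ => ?_
    have h1 : ‖S i j‖ ≤ Real.sqrt (s i * s j) := by
      rw [← Real.sqrt_sq (norm_nonneg (S i j))]
      exact Real.sqrt_le_sqrt (aux_entry_abs_sq_le hS i j)
    have h2 : ‖T j i‖ ≤ Real.sqrt (t j * t i) := by
      rw [← Real.sqrt_sq (norm_nonneg (T j i))]
      exact Real.sqrt_le_sqrt (aux_entry_abs_sq_le hT j i)
    have e1 : Real.sqrt (s i * s j) * Real.sqrt (t j * t i)
        = Real.sqrt (s i * t i) * Real.sqrt (s j * t j) := by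
      rw [← Real.sqrt_mul (mul_nonneg (hs i) (hs j)), ← Real.sqrt_mul (mul_nonneg (hs i) (ht i))]
      congr 1; ring
    calc ‖a i * (S i j * (b j * T j i))‖
        = g i * (‖S i j‖ * (g j * ‖T j i‖)) := by
          rw [norm_mul, norm_mul, norm_mul, ha, hb]
      _ ≤ g i * (Real.sqrt (s i * s j) * (g j * Real.sqrt (t j * t i))) := by
          gcongr <;>
            first
              | exact hg _
              | exact norm_nonneg _
              | exact mul_nonneg (hg _) (norm_nonneg _)
      _ = r i * r j := by
          rw [show g i * (Real.sqrt (s i * s j) * (g j * Real.sqrt (t j * t i)))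
              = g i * g j * (Real.sqrt (s i * s j) * Real.sqrt (t j * t i)) from by ring, e1,
            hr_def]
          ring
  refine step1.trans ?_
  have step2 : ∑ i, ∑ j, r i * r j = (∑ i, r i) ^ 2 := by
    rw [sq, Finset.sum_mul_sum]
  rw [step2]
  exact Finset.sum_sq_le_sum_mul_sum_of_sq_eq_mul _
    (fun i _ => mul_nonneg (hg i) (hs i)) (fun i _ => mul_nonneg (hg i) (ht i))
    (fun i _ => by rw [hr_def, mul_pow, Real.sq_sqrt (mul_nonneg (hs i) (ht i))]; ring)

/-- The normalized trace `⟨A⟩ = N⁻¹ Tr A`. -/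
noncomputable def ntr {N : ℕ} (A : Matrix (Fin N) (Fin N) ℂ) : ℂ :=
  (N : ℂ)⁻¹ * A.trace

/-- The positive semidefinite square root of a positive semidefinite matrix
(restored: removed from Mathlib; same definition as in the older library). -/
noncomputable def Matrix.PosSemidef.sqrt {n 𝕜 : Type*} [Fintype n] [DecidableEq n] [RCLike 𝕜]
    {A : Matrix n n 𝕜} (hA : A.PosSemidef) : Matrix n n 𝕜 :=
  (hA.1.eigenvectorUnitary : Matrix n n 𝕜) *
    diagonal (fun i => ((Real.sqrt (hA.1.eigenvalues i) : ℝ) : 𝕜)) *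
    (star hA.1.eigenvectorUnitary : Matrix n n 𝕜)

open scoped MatrixOrder in
lemma aux_sqrt_eq {n : Type*} [Fintype n] [DecidableEq n] {A Q : Matrix n n ℂ}
    (hA : A.PosSemidef) (hQ : Q.PosSemidef) (h : Q ^ 2 = A) : hA.sqrt = Q := by
  have e : hA.sqrt = CFC.sqrt A := by
    rw [CFC.sqrt_eq_cfc, cfc_nnreal_eq_real _ A hA.nonneg, hA.1.cfc_eq]
    simp only [Matrix.PosSemidef.sqrt, IsHermitian.cfc, Unitary.conjStarAlgAut_apply]
    congr 2
    ext i j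
    simp [Matrix.diagonal_apply, max_eq_left (hA.eigenvalues_nonneg i)]
  rw [e]
  exact CFC.sqrt_unique (by rw [← h, sq]) hQ.nonneg

/-- Reduction inequality: for the resolvent `G₂` of a Hermitian matrix and positive
semidefinite `S, T`, one has `|⟨G₂ S G₂* T⟩| ≲ N ⟨|G₂| S⟩ ⟨|G₂| T⟩`, with an absolute
implicit constant, where `|G₂| = (G₂G₂*)^{1/2}`. -/
theorem stmt_8 :
    ∃ C : ℝ, 0 < C ∧
      ∀ (N : ℕ) (H : Matrix (Fin N) (Fin N) ℂ), H.IsHermitian →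
        ∀ z₂ : ℂ, z₂.im ≠ 0 →
          ∀ S T : Matrix (Fin N) (Fin N) ℂ, S.PosSemidef → T.PosSemidef →
            ‖ntr ((H - z₂ • 1)⁻¹ * S * ((H - z₂ • 1)⁻¹)ᴴ * T)‖ ≤
              C * N *
                ‖ntr
                  ((Matrix.posSemidef_self_mul_conjTranspose (H - z₂ • 1)⁻¹).sqrt * S)‖ *
                ‖ntr
                  ((Matrix.posSemidef_self_mul_conjTranspose (H - z₂ • 1)⁻¹).sqrt * T)‖ := by
  refine ⟨1, one_pos, ?_⟩
  intro N H hH z₂ hz S T hS hT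
  classical
  set U : Matrix (Fin N) (Fin N) ℂ := (hH.eigenvectorUnitary : Matrix (Fin N) (Fin N) ℂ) with hU_def
  have hUV : U * star U = 1 := Matrix.mem_unitaryGroup_iff.mp hH.eigenvectorUnitary.2
  have hVU : star U * U = 1 := Matrix.mem_unitaryGroup_iff'.mp hH.eigenvectorUnitary.2
  set f : Fin N → ℂ := fun i => (hH.eigenvalues i : ℂ) - z₂ with hf_def
  have hf : ∀ i, f i ≠ 0 := by
    intro i h
    apply hz
    have := congrArg Complex.im h
    simpa [hf_def] using this.symm
  have hHz : H - z₂ • 1 = U * diagonal f * star U := by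
    have h1 : (z₂ • 1 : Matrix (Fin N) (Fin N) ℂ) = U * (z₂ • 1) * star U := by
      rw [mul_smul_comm, mul_one, smul_mul_assoc, hUV]
    have h2 : diagonal (RCLike.ofReal ∘ hH.eigenvalues) - z₂ • (1 : Matrix (Fin N) (Fin N) ℂ)
        = diagonal f := by
      rw [smul_one_eq_diagonal, ← diagonal_sub]
      rfl
    conv_lhs => rw [hH.spectral_theorem, Unitary.conjStarAlgAut_apply, h1]
    rw [← Matrix.sub_mul, ← Matrix.mul_sub, h2]
  have hdd : diagonal f * diagonal f⁻¹ = 1 := by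
    rw [diagonal_mul_diagonal,
      show (fun i => f i * f⁻¹ i) = fun _ => 1 from funext fun i => mul_inv_cancel₀ (hf i)]
    exact diagonal_one
  have hG : (H - z₂ • 1)⁻¹ = U * diagonal f⁻¹ * star U := by
    rw [hHz]
    apply Matrix.inv_eq_right_inv
    calc U * diagonal f * star U * (U * diagonal f⁻¹ * star U)
        = U * (diagonal f * ((star U * U) * (diagonal f⁻¹ * star U))) := by
          simp only [Matrix.mul_assoc]
      _ = 1 := by rw [hVU, Matrix.one_mul, ← Matrix.mul_assoc (diagonal f), hdd,
          Matrix.one_mul, hUV]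
  have hGH : ((H - z₂ • 1)⁻¹)ᴴ = U * diagonal (star f⁻¹) * star U := by
    rw [hG]
    simp only [Matrix.conjTranspose_mul, Matrix.diagonal_conjTranspose,
      Matrix.star_eq_conjTranspose, Matrix.conjTranspose_conjTranspose, Matrix.mul_assoc]
  set g : Fin N → ℝ := fun i => ‖f i‖⁻¹ with hg_def
  set Q : Matrix (Fin N) (Fin N) ℂ := U * diagonal (fun i => (g i : ℂ)) * star U with hQ_def
  have hQpsd : Q.PosSemidef := by
    rw [hQ_def, Matrix.star_eq_conjTranspose]
    exact (posSemidef_diagonal_iff.mpr fun i =>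
      Complex.zero_le_real.mpr (inv_nonneg.mpr (norm_nonneg _))).mul_mul_conjTranspose_same U
  have sandwich : ∀ (A B : Matrix (Fin N) (Fin N) ℂ),
      (U * A * star U) * (U * B * star U) = U * (A * B) * star U := by
    intro A B
    calc (U * A * star U) * (U * B * star U) = U * (A * ((star U * U) * (B * star U))) := by
          simp only [Matrix.mul_assoc]
      _ = U * (A * B) * star U := by rw [hVU, Matrix.one_mul, Matrix.mul_assoc, Matrix.mul_assoc]
  have hsq : Q ^ 2 = (H - z₂ • 1)⁻¹ * ((H - z₂ • 1)⁻¹)ᴴ := by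
    rw [pow_two, hQ_def, hGH, hG, sandwich, sandwich, diagonal_mul_diagonal,
      diagonal_mul_diagonal]
    have key : (fun i => ((g i : ℂ)) * ((g i : ℂ))) = fun i => f⁻¹ i * (star f⁻¹) i := by
      funext i
      have h1 : (starRingEnd ℂ) (f i) * f i = ((‖f i‖ ^ 2 : ℝ) : ℂ) := by
        rw [mul_comm, Complex.mul_conj, Complex.sq_norm]
      have h2 : f⁻¹ i * (star f⁻¹) i = ((starRingEnd ℂ) (f i) * f i)⁻¹ := by
        simp only [Pi.inv_apply, Pi.star_apply, star_inv₀, ← mul_inv]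
        rw [mul_comm]
        rfl
      rw [h2, h1, hg_def]
      rw [← Complex.ofReal_inv]
      norm_cast
      show (‖f i‖)⁻¹ * (‖f i‖)⁻¹ = (‖f i‖ ^ 2)⁻¹
      rw [pow_two, mul_inv]
    rw [key]
  have hQsqrt : (Matrix.posSemidef_self_mul_conjTranspose (H - z₂ • 1)⁻¹).sqrt = Q :=
    aux_sqrt_eq _ hQpsd hsq
  set S' : Matrix (Fin N) (Fin N) ℂ := star U * S * U with hS'_def
  set T' : Matrix (Fin N) (Fin N) ℂ := star U * T * U with hT'_def
  have hS' : S'.PosSemidef := hS.conjTranspose_mul_mul_same U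
  have hT' : T'.PosSemidef := hT.conjTranspose_mul_mul_same U
  have hmat : (H - z₂ • 1)⁻¹ * S * ((H - z₂ • 1)⁻¹)ᴴ * T
      = U * (diagonal f⁻¹ * (S' * (diagonal (star f⁻¹) * T'))) * star U := by
    rw [hGH, hG, hS'_def, hT'_def]
    simp only [Matrix.mul_assoc, hUV, Matrix.mul_one]
  have htr1 : ((H - z₂ • 1)⁻¹ * S * ((H - z₂ • 1)⁻¹)ᴴ * T).trace
      = ∑ i, ∑ j, (f⁻¹ i) * (S' i j * ((star f⁻¹) j * T' j i)) := by
    rw [hmat, Matrix.trace_mul_cycle, ← Matrix.mul_assoc, hVU, Matrix.one_mul, Matrix.trace]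
    refine Finset.sum_congr rfl fun i _ => ?_
    simp only [Matrix.diag_apply, Matrix.mul_apply, Matrix.diagonal_apply, ite_mul, zero_mul,
      Finset.mul_sum, Finset.sum_ite_irrel, Finset.sum_const_zero, Finset.sum_ite_eq,
      Finset.mem_univ, if_true]
  have hmat2 : ∀ (W : Matrix (Fin N) (Fin N) ℂ),
      Q * W = U * (diagonal (fun i => (g i : ℂ)) * (star U * W * U)) * star U := by
    intro W
    rw [hQ_def]
    simp only [Matrix.mul_assoc, hUV, Matrix.mul_one]
  have htr2 : ∀ (W : Matrix (Fin N) (Fin N) ℂ),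
      (Q * W).trace = ∑ i, ((g i : ℂ)) * (star U * W * U) i i := by
    intro W
    rw [hmat2 W, Matrix.trace_mul_cycle, ← Matrix.mul_assoc, hVU, Matrix.one_mul, Matrix.trace]
    refine Finset.sum_congr rfl fun i _ => ?_
    simp only [Matrix.diag_apply, Matrix.mul_apply, Matrix.diagonal_apply, ite_mul, zero_mul,
      Finset.sum_ite_eq, Finset.mem_univ, if_true]
  have hdiagreal : ∀ (M : Matrix (Fin N) (Fin N) ℂ), M.PosSemidef →
      ∀ i, ((M i i).re : ℂ) = M i i := by
    intro M hM i
    apply Complex.conj_eq_iff_re.mp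
    have := congrFun (congrFun hM.1 i) i
    rwa [Matrix.conjTranspose_apply] at this
  have hg0 : ∀ i, 0 ≤ g i := fun i => inv_nonneg.mpr (norm_nonneg _)
  have hQabs : ∀ (W : Matrix (Fin N) (Fin N) ℂ), (star U * W * U).PosSemidef →
      ‖(Q * W).trace‖ = ∑ i, g i * ((star U * W * U) i i).re := by
    intro W hW
    rw [htr2 W]
    have : (∑ i, ((g i : ℂ)) * (star U * W * U) i i)
        = ((∑ i, g i * ((star U * W * U) i i).re : ℝ) : ℂ) := by
      push_cast
      refine Finset.sum_congr rfl fun i _ => ?_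
      rw [hdiagreal _ hW i]
    rw [this, Complex.norm_real, Real.norm_of_nonneg]
    exact Finset.sum_nonneg fun i _ => mul_nonneg (hg0 i) (aux_diag_re_nonneg hW i)
  have hcore : ‖((H - z₂ • 1)⁻¹ * S * ((H - z₂ • 1)⁻¹)ᴴ * T).trace‖
      ≤ (∑ i, g i * (S' i i).re) * (∑ i, g i * (T' i i).re) := by
    rw [htr1]
    refine aux_core hS' hT' f⁻¹ (star f⁻¹) g (fun i => ?_) (fun i => ?_)
    · rw [Pi.inv_apply, norm_inv]
    · rw [Pi.star_apply, Pi.inv_apply, star_inv₀, norm_inv]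
      congr 1
      exact norm_star _
  have habs_ntr : ∀ (A : Matrix (Fin N) (Fin N) ℂ),
      ‖ntr A‖ = (N : ℝ)⁻¹ * ‖A.trace‖ := by
    intro A
    rw [ntr, norm_mul, norm_inv, Complex.norm_natCast]
  rw [habs_ntr, habs_ntr, habs_ntr, hQsqrt, hQabs S hS', hQabs T hT']
  rcases Nat.eq_zero_or_pos N with hN | hN
  · subst hN
    simp
  · have hN' : (N : ℝ) ≠ 0 := by positivity
    rw [show (1 : ℝ) * N * ((N : ℝ)⁻¹ * ∑ i, g i * (S' i i).re)
          * ((N : ℝ)⁻¹ * ∑ i, g i * (T' i i).re)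
        = (N : ℝ)⁻¹ * ((∑ i, g i * (S' i i).re) * (∑ i, g i * (T' i i).re)) from by
      field_simp]
    exact mul_le_mul_of_nonneg_left hcore (inv_nonneg.mpr (Nat.cast_nonneg N))
end

section
/- Let M_1, M_2 be solutions of the Matrix Dyson Equations -M_1^{-1} = z_1 - D_1 + ⟨M_1⟩ and -M_2^{-1} = z_2 - D_2 + ⟨M_2⟩, with ⟨M_1 M_2⟩ ≠ 1. Then z_1 - z_2 - ⟨M_1(D_1 - D_2)M_2⟩/⟨M_1 M_2⟩ = (1 - ⟨M_1 M_2⟩)(⟨M_1⟩ - ⟨M_2⟩)/⟨M_1 M_2⟩, provided ⟨M_1 M_2⟩ ≠ 0. -/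
open Matrix

lemma ntr_add {N : ℕ} (A B : Matrix (Fin N) (Fin N) ℂ) : ntr (A + B) = ntr A + ntr B := by
  simp [ntr, trace_add, mul_add]

lemma ntr_sub {N : ℕ} (A B : Matrix (Fin N) (Fin N) ℂ) : ntr (A - B) = ntr A - ntr B := by
  simp [ntr, trace_sub, mul_sub]

lemma ntr_smul {N : ℕ} (c : ℂ) (A : Matrix (Fin N) (Fin N) ℂ) : ntr (c • A) = c * ntr A := by
  simp [ntr, trace_smul]; ring

/-- For solutions `M₁, M₂` of the Matrix Dyson Equations
`-Mⱼ⁻¹ = zⱼ - Dⱼ + ⟨Mⱼ⟩`, with `⟨M₁M₂⟩ ∉ {0,1}`, one has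
`z₁ - z₂ - ⟨M₁(D₁-D₂)M₂⟩/⟨M₁M₂⟩ = (1 - ⟨M₁M₂⟩)(⟨M₁⟩ - ⟨M₂⟩)/⟨M₁M₂⟩`. -/
theorem stmt_10 {N : ℕ} (hN : 0 < N)
    (M₁ M₂ D₁ D₂ : Matrix (Fin N) (Fin N) ℂ) (z₁ z₂ : ℂ)
    (hM₁inv : IsUnit M₁.det) (hM₂inv : IsUnit M₂.det)
    (hMDE₁ : -M₁⁻¹ = z₁ • (1 : Matrix (Fin N) (Fin N) ℂ) - D₁ +
      ntr M₁ • (1 : Matrix (Fin N) (Fin N) ℂ))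
    (hMDE₂ : -M₂⁻¹ = z₂ • (1 : Matrix (Fin N) (Fin N) ℂ) - D₂ +
      ntr M₂ • (1 : Matrix (Fin N) (Fin N) ℂ))
    (h1 : ntr (M₁ * M₂) ≠ 1) (h0 : ntr (M₁ * M₂) ≠ 0) :
    z₁ - z₂ - ntr (M₁ * (D₁ - D₂) * M₂) / ntr (M₁ * M₂) =
      (1 - ntr (M₁ * M₂)) * (ntr M₁ - ntr M₂) / ntr (M₁ * M₂) := by
  have hD₁ : D₁ = (z₁ + ntr M₁) • (1 : Matrix (Fin N) (Fin N) ℂ) + M₁⁻¹ := by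
    have := hMDE₁
    rw [add_smul]
    linear_combination (norm := module) this
  have hD₂ : D₂ = (z₂ + ntr M₂) • (1 : Matrix (Fin N) (Fin N) ℂ) + M₂⁻¹ := by
    rw [add_smul]
    linear_combination (norm := module) hMDE₂
  have key : M₁ * (D₁ - D₂) * M₂ =
      ((z₁ + ntr M₁) - (z₂ + ntr M₂)) • (M₁ * M₂) + M₂ - M₁ := by
    rw [hD₁, hD₂]
    have h1' : M₁ * M₁⁻¹ = 1 := mul_nonsing_inv _ hM₁inv
    have h2' : M₂⁻¹ * M₂ = 1 := nonsing_inv_mul _ hM₂inv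
    rw [add_sub_add_comm, ← sub_smul]
    rw [Matrix.mul_add, Matrix.add_mul, Matrix.mul_smul, Matrix.smul_mul,
      Matrix.mul_one, Matrix.mul_assoc, Matrix.sub_mul, h2', Matrix.mul_sub,
      Matrix.mul_one, ← Matrix.mul_assoc, h1', Matrix.one_mul]
    abel
  rw [key, ntr_sub, ntr_add, ntr_smul]
  field_simp
  ring
end

section
/- Let M_1, M_2 be solutions of the MDE at spectral parameters z_1, z_2 respectively (with deformations D_1, D_2). Then M_1(z_1) - M_2(z_2) = [(z_1 - z_2 - ⟨M_1(D_1-D_2)M_2⟩)/(1 - ⟨M_1M_2⟩)] M_1 M_2 - M_1(D_1 - D_2)M_2, provided ⟨M_1 M_2⟩ ≠ 1. -/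
open Matrix

/-- For solutions `M₁, M₂` of the MDEs `-Mⱼ⁻¹ = zⱼ - Dⱼ + ⟨Mⱼ⟩`, with `⟨M₁M₂⟩ ≠ 1`:
`M₁ - M₂ = [(z₁ - z₂ - ⟨M₁(D₁-D₂)M₂⟩)/(1 - ⟨M₁M₂⟩)] M₁M₂ - M₁(D₁-D₂)M₂`. -/
theorem stmt_11 {N : ℕ} (hN : 0 < N)
    (M₁ M₂ D₁ D₂ : Matrix (Fin N) (Fin N) ℂ) (z₁ z₂ : ℂ)
    (hM₁inv : IsUnit M₁.det) (hM₂inv : IsUnit M₂.det)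
    (hMDE₁ : -M₁⁻¹ = z₁ • (1 : Matrix (Fin N) (Fin N) ℂ) - D₁ +
      ntr M₁ • (1 : Matrix (Fin N) (Fin N) ℂ))
    (hMDE₂ : -M₂⁻¹ = z₂ • (1 : Matrix (Fin N) (Fin N) ℂ) - D₂ +
      ntr M₂ • (1 : Matrix (Fin N) (Fin N) ℂ))
    (h1 : ntr (M₁ * M₂) ≠ 1) :
    M₁ - M₂ =
      ((z₁ - z₂ - ntr (M₁ * (D₁ - D₂) * M₂)) / (1 - ntr (M₁ * M₂))) • (M₁ * M₂) -
        M₁ * (D₁ - D₂) * M₂ := by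
  have hinv1 : M₁⁻¹ = D₁ - z₁ • (1 : Matrix (Fin N) (Fin N) ℂ) -
      ntr M₁ • (1 : Matrix (Fin N) (Fin N) ℂ) := by
    have := congrArg Neg.neg hMDE₁
    rw [neg_neg] at this
    rw [this]; abel
  have hinv2 : M₂⁻¹ = D₂ - z₂ • (1 : Matrix (Fin N) (Fin N) ℂ) -
      ntr M₂ • (1 : Matrix (Fin N) (Fin N) ℂ) := by
    have := congrArg Neg.neg hMDE₂
    rw [neg_neg] at this
    rw [this]; abel
  have key : M₁ - M₂ = (z₁ - z₂ + (ntr M₁ - ntr M₂)) • (M₁ * M₂) -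
      M₁ * (D₁ - D₂) * M₂ := by
    have e : M₁ - M₂ = M₁ * (M₂⁻¹ - M₁⁻¹) * M₂ := by
      rw [mul_sub, sub_mul, mul_assoc M₁ M₂⁻¹ M₂, nonsing_inv_mul _ hM₂inv,
        mul_one, mul_nonsing_inv _ hM₁inv, one_mul]
    rw [e, hinv1, hinv2]
    simp only [mul_sub, sub_mul, add_mul, mul_add, smul_mul_assoc,
      mul_smul_comm, mul_one, one_mul, smul_sub, sub_smul, add_smul,
      Matrix.mul_assoc]
    abel
  have htr := congrArg ntr key
  rw [ntr_sub, ntr_sub, ntr_smul] at htr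
  set m := ntr (M₁ * M₂) with hm
  set s := ntr (M₁ * (D₁ - D₂) * M₂) with hs
  set t₁ := ntr M₁
  set t₂ := ntr M₂
  have hden : (1 : ℂ) - m ≠ 0 := sub_ne_zero.mpr (Ne.symm h1)
  have hc : z₁ - z₂ + (t₁ - t₂) = (z₁ - z₂ - s) / (1 - m) := by
    field_simp
    linear_combination htr
  rw [key, hc]
end
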